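/- Let q be a complex number with 0 < |q| < 1 and let n ≥ 1 be an integer. Then ∑_{k=0}^{n} (k(k−1)/2)·[n choose k]_q·(−1)^k·q^{k(k−1)/2} = (q;q)_{n−1} · ∑_{k=1}^{n−1} q^k/(1 − q^k). -/

import Mathlib

/-- The finite q-Pochhammer symbol `(a;q)_n = ∏_{k=0}^{n-1} (1 - a q^k)`. -/
noncomputable def qPoch (a q : ℂ) (n : ℕ) : ℂ := ∏ k ∈ Finset.range n, (1 - a * q ^ k)

/-- The Gaussian (q-binomial) coefficient `[n choose k]_q`. -/
noncomputable def qBinom (q : ℂ) (n k : ℕ) : ℂ := qPoch q q n / (qPoch q q k * qPoch q q (n - k))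

open Polynomial Finset

private lemma tri_succ (j : ℕ) : (j + 1) * j / 2 = j * (j - 1) / 2 + j := by
  cases j with
  | zero => rfl
  | succ k =>
    have h : (k + 1 + 1) * (k + 1) = (k + 1) * k + (k + 1) * 2 := by ring
    simp only [Nat.succ_sub_one, h, Nat.add_mul_div_right _ _ (by norm_num : 0 < 2)]

section

variable {q : ℂ} (hq : ∀ k : ℕ, 1 ≤ k → (1 : ℂ) - q ^ k ≠ 0)

private lemma pq_succ (k : ℕ) : qPoch q q (k + 1) = qPoch q q k * (1 - q ^ (k + 1)) := by
  rw [qPoch, Finset.prod_range_succ, ← pow_succ', qPoch]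

include hq in
private lemma pq_ne (m : ℕ) : qPoch q q m ≠ 0 := by
  rw [qPoch]
  refine Finset.prod_ne_zero_iff.mpr fun k _ => ?_
  have := hq (k + 1) (by omega)
  rwa [pow_succ'] at this

include hq in
omit hq in
private lemma pq_zero : qPoch q q 0 = 1 := by simp [qPoch]

include hq in
private lemma qBinom_zero (n : ℕ) : qBinom q n 0 = 1 := by
  rw [qBinom, Nat.sub_zero, pq_zero, one_mul, div_self (pq_ne hq n)]

include hq in
private lemma qBinom_self (n : ℕ) : qBinom q n n = 1 := by
  rw [qBinom, Nat.sub_self, pq_zero, mul_one, div_self (pq_ne hq n)]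

/-- `Fp q n = ∏_{j<n} (1 - q^j X)`. -/
noncomputable def Fp (q : ℂ) (n : ℕ) : Polynomial ℂ :=
  ∏ j ∈ Finset.range n, (1 - C (q ^ j) * X)

/-- `Rp q m = ∏_{j<m} (1 - q^(j+1) X)`. -/
noncomputable def Rp (q : ℂ) (m : ℕ) : Polynomial ℂ :=
  ∏ j ∈ Finset.range m, (1 - C (q ^ (j + 1)) * X)

private lemma natDegree_lin (a : ℂ) : (1 - C a * X : Polynomial ℂ).natDegree ≤ 1 := by
  refine le_trans (natDegree_sub_le _ _) ?_
  simp only [natDegree_one, max_le_iff]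
  exact ⟨by norm_num, le_trans (natDegree_C_mul_le _ _) (by simp)⟩

private lemma natDegree_Fp_le (n : ℕ) : (Fp q n).natDegree ≤ n := by
  refine le_trans (natDegree_prod_le _ _) ?_
  calc ∑ j ∈ Finset.range n, (1 - C (q ^ j) * X : Polynomial ℂ).natDegree
      ≤ ∑ _j ∈ Finset.range n, 1 := Finset.sum_le_sum fun j _ => natDegree_lin _
    _ = n := by simp

private lemma natDegree_Rp_le (m : ℕ) : (Rp q m).natDegree ≤ m := by
  refine le_trans (natDegree_prod_le _ _) ?_
  calc ∑ j ∈ Finset.range m, (1 - C (q ^ (j + 1)) * X : Polynomial ℂ).natDegree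
      ≤ ∑ _j ∈ Finset.range m, 1 := Finset.sum_le_sum fun j _ => natDegree_lin _
    _ = m := by simp

private lemma coeff_Rp_top (m : ℕ) : (Rp q m).coeff (m + 1) = 0 :=
  coeff_eq_zero_of_natDegree_lt (lt_of_le_of_lt (natDegree_Rp_le m) (by omega))

include hq in
/-- Pascal-type step for the coefficients. -/
private lemma pascal_step {n j : ℕ} (hjn : j + 1 ≤ n) :
    qBinom q n (j + 1) * (-1) ^ (j + 1) * q ^ ((j + 1) * j / 2) -
      q ^ n * (qBinom q n j * (-1) ^ j * q ^ (j * (j - 1) / 2)) =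
    qBinom q (n + 1) (j + 1) * (-1) ^ (j + 1) * q ^ ((j + 1) * j / 2) := by
  obtain ⟨m, rfl⟩ : ∃ m, n = j + 1 + m := ⟨n - (j + 1), by omega⟩
  simp only [qBinom]
  rw [show j + 1 + m - (j + 1) = m from by omega,
      show j + 1 + m - j = m + 1 from by omega,
      show j + 1 + m + 1 - (j + 1) = m + 1 from by omega]
  rw [show qPoch q q (j + 1 + m + 1) = qPoch q q (j + 1 + m) * (1 - q ^ (j + 1 + m + 1)) from
        pq_succ _,
      pq_succ j, pq_succ m, tri_succ j]
  have h1 : qPoch q q j ≠ 0 := pq_ne hq j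
  have h2 : qPoch q q m ≠ 0 := pq_ne hq m
  have h3 : qPoch q q (j + 1 + m) ≠ 0 := pq_ne hq _
  have h4 : (1 : ℂ) - q ^ (j + 1) ≠ 0 := hq _ (by omega)
  have h5 : (1 : ℂ) - q ^ (m + 1) ≠ 0 := hq _ (by omega)
  have h6 : (1 : ℂ) - q ^ (j + 1 + m + 1) ≠ 0 := hq _ (by omega)
  field_simp
  ring

include hq in
/-- The q-binomial theorem at the level of coefficients. -/
private lemma coeff_Fp : ∀ n k, k ≤ n →
    (Fp q n).coeff k = qBinom q n k * (-1) ^ k * q ^ (k * (k - 1) / 2) := by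
  intro n
  induction n with
  | zero =>
    intro k hk
    interval_cases k
    simp [Fp, qBinom_zero hq]
  | succ n ih =>
    intro k hk
    have hsplit : Fp q (n + 1) = Fp q n - C (q ^ n) * (Fp q n * X) := by
      simp only [Fp, Finset.prod_range_succ]; ring
    rw [hsplit, coeff_sub, coeff_C_mul]
    cases k with
    | zero =>
      rw [coeff_mul_X_zero, mul_zero, sub_zero, ih 0 (by omega)]
      rw [qBinom_zero hq, qBinom_zero hq]
    | succ j =>
      rw [coeff_mul_X]
      rcases Nat.lt_or_ge j n with hj | hj
      · -- j + 1 ≤ n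
        rw [ih (j + 1) (by omega), ih j (by omega)]
        have := pascal_step hq (n := n) (j := j) (by omega)
        simpa [Nat.succ_sub_one] using this
      · -- j = n
        have hjn : j = n := by omega
        subst hjn
        have hdeg : (Fp q j).coeff (j + 1) = 0 :=
          coeff_eq_zero_of_natDegree_lt (lt_of_le_of_lt (natDegree_Fp_le j) (by omega))
        rw [hdeg, ih j le_rfl, qBinom_self hq, qBinom_self hq]
        simp only [Nat.succ_sub_one, zero_sub, one_mul]
        rw [tri_succ j, pow_succ (-1 : ℂ) j, pow_add]
        ring

omit hq in
private lemma Rp_eval_one (m : ℕ) : (Rp q m).eval 1 = qPoch q q m := by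
  rw [Rp, Polynomial.eval_prod, qPoch]
  refine Finset.prod_congr rfl fun j _ => ?_
  simp [pow_succ']

omit hq in
private lemma Z_sum (m : ℕ) :
    ∑ k ∈ Finset.range (m + 1), (Rp q m).coeff k = qPoch q q m := by
  have h := eval_eq_sum_range' (p := Rp q m)
    (lt_of_le_of_lt (natDegree_Rp_le m) (Nat.lt_succ_self m)) 1
  simp only [one_pow, mul_one] at h
  rw [← h, Rp_eval_one]

include hq in
/-- The weighted coefficient sum. -/
private lemma W_sum : ∀ m, ∑ k ∈ Finset.range (m + 1), (k : ℂ) * (Rp q m).coeff k =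
    -qPoch q q m * ∑ j ∈ Finset.Icc 1 m, q ^ j / (1 - q ^ j) := by
  intro m
  induction m with
  | zero => simp [Rp]
  | succ m ih =>
    have hsplit : Rp q (m + 1) = Rp q m - C (q ^ (m + 1)) * (Rp q m * X) := by
      simp only [Rp, Finset.prod_range_succ]; ring
    have hco : ∀ k, (Rp q (m + 1)).coeff k =
        (Rp q m).coeff k - q ^ (m + 1) * (Rp q m * X).coeff k := by
      intro k; rw [hsplit, coeff_sub, coeff_C_mul]
    calc ∑ k ∈ Finset.range (m + 2), (k : ℂ) * (Rp q (m + 1)).coeff k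
        = ∑ k ∈ Finset.range (m + 2), ((k : ℂ) * (Rp q m).coeff k -
            q ^ (m + 1) * ((k : ℂ) * (Rp q m * X).coeff k)) := by
          refine Finset.sum_congr rfl fun k _ => ?_
          rw [hco k]; ring
      _ = (∑ k ∈ Finset.range (m + 2), (k : ℂ) * (Rp q m).coeff k) -
            q ^ (m + 1) * ∑ k ∈ Finset.range (m + 2), (k : ℂ) * (Rp q m * X).coeff k := by
          rw [Finset.sum_sub_distrib, Finset.mul_sum]
      _ = (∑ k ∈ Finset.range (m + 1), (k : ℂ) * (Rp q m).coeff k) -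
            q ^ (m + 1) * ∑ k ∈ Finset.range (m + 1),
              ((k : ℂ) + 1) * (Rp q m).coeff k := by
          congr 1
          · rw [Finset.sum_range_succ, coeff_Rp_top, mul_zero, add_zero]
          · congr 1
            rw [show m + 2 = m + 1 + 1 from rfl]
            conv_lhs => rw [Finset.sum_range_succ']
            simp only [coeff_mul_X, coeff_mul_X_zero, Nat.cast_zero, zero_mul, mul_zero,
              add_zero, Nat.cast_add, Nat.cast_one]
      _ = (1 - q ^ (m + 1)) * (∑ k ∈ Finset.range (m + 1), (k : ℂ) * (Rp q m).coeff k) -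
            q ^ (m + 1) * ∑ k ∈ Finset.range (m + 1), (Rp q m).coeff k := by
          rw [Finset.mul_sum, Finset.mul_sum, Finset.mul_sum]
          rw [← Finset.sum_sub_distrib, ← Finset.sum_sub_distrib]
          refine Finset.sum_congr rfl fun k _ => ?_
          ring
      _ = -qPoch q q (m + 1) * ∑ j ∈ Finset.Icc 1 (m + 1), q ^ j / (1 - q ^ j) := by
          rw [ih, Z_sum, pq_succ m,
            Finset.sum_Icc_succ_top (by omega : 1 ≤ m + 1)]
          have h5 : (1 : ℂ) - q ^ (m + 1) ≠ 0 := hq _ (by omega)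
          field_simp
          ring

end

theorem stmt3 (q : ℂ) (hq0 : 0 < ‖q‖) (hq1 : ‖q‖ < 1)
    (n : ℕ) (hn : 1 ≤ n) :
    ∑ k ∈ Finset.range (n + 1),
        ((k * (k - 1) / 2 : ℕ) : ℂ) * qBinom q n k * (-1) ^ k * q ^ (k * (k - 1) / 2) =
      qPoch q q (n - 1) * ∑ k ∈ Finset.Icc 1 (n - 1), q ^ k / (1 - q ^ k) := by
  have hq : ∀ k : ℕ, 1 ≤ k → (1 : ℂ) - q ^ k ≠ 0 := by
    intro k hk h
    have h1 : q ^ k = 1 := by linear_combination -h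
    have h2 : ‖q‖ ^ k = 1 := by rw [← norm_pow, h1, norm_one]
    have hlt : ‖q‖ ^ k < 1 := pow_lt_one₀ hq0.le hq1 (by omega)
    linarith
  obtain ⟨m, rfl⟩ : ∃ m, n = m + 1 := ⟨n - 1, by omega⟩
  simp only [Nat.add_sub_cancel]
  -- Step 1: rewrite the sum via coefficients of Fp
  have h1 : ∑ k ∈ Finset.range (m + 2),
      ((k * (k - 1) / 2 : ℕ) : ℂ) * qBinom q (m + 1) k * (-1) ^ k * q ^ (k * (k - 1) / 2) =
      ∑ k ∈ Finset.range (m + 2), ((k * (k - 1) / 2 : ℕ) : ℂ) * (Fp q (m + 1)).coeff k := by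
    refine Finset.sum_congr rfl fun k hk => ?_
    rw [coeff_Fp hq (m + 1) k (by simpa using Nat.lt_succ_iff.mp (Finset.mem_range.mp hk))]
    ring
  rw [h1]
  -- Step 2: Fp (m+1) in terms of Rp m
  have hsplit : Fp q (m + 1) = Rp q m - Rp q m * X := by
    rw [Fp, Finset.prod_range_succ']
    simp only [pow_zero, map_one, one_mul]
    rw [Rp]; ring
  have hco : ∀ k, (Fp q (m + 1)).coeff k = (Rp q m).coeff k - (Rp q m * X).coeff k := by
    intro k; rw [hsplit, coeff_sub]
  -- Step 3: Abel summation
  have h2 : ∑ k ∈ Finset.range (m + 2), ((k * (k - 1) / 2 : ℕ) : ℂ) * (Fp q (m + 1)).coeff k =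
      -∑ k ∈ Finset.range (m + 1), (k : ℂ) * (Rp q m).coeff k := by
    calc ∑ k ∈ Finset.range (m + 2), ((k * (k - 1) / 2 : ℕ) : ℂ) * (Fp q (m + 1)).coeff k
        = (∑ k ∈ Finset.range (m + 2), ((k * (k - 1) / 2 : ℕ) : ℂ) * (Rp q m).coeff k) -
          ∑ k ∈ Finset.range (m + 2), ((k * (k - 1) / 2 : ℕ) : ℂ) * (Rp q m * X).coeff k := by
          rw [← Finset.sum_sub_distrib]
          refine Finset.sum_congr rfl fun k _ => ?_
          rw [hco k]; ring
      _ = (∑ k ∈ Finset.range (m + 1), ((k * (k - 1) / 2 : ℕ) : ℂ) * (Rp q m).coeff k) -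
          ∑ k ∈ Finset.range (m + 1), (((k + 1) * k / 2 : ℕ) : ℂ) * (Rp q m).coeff k := by
          congr 1
          · rw [Finset.sum_range_succ, coeff_Rp_top, mul_zero, add_zero]
          · rw [show m + 2 = m + 1 + 1 from rfl]
            conv_lhs => rw [Finset.sum_range_succ']
            simp only [coeff_mul_X, coeff_mul_X_zero, mul_zero, add_zero, Nat.add_sub_cancel]
      _ = -∑ k ∈ Finset.range (m + 1), (k : ℂ) * (Rp q m).coeff k := by
          rw [← Finset.sum_sub_distrib, ← Finset.sum_neg_distrib]
          refine Finset.sum_congr rfl fun k _ => ?_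
          have ht : ((k + 1) * k / 2 : ℕ) = (k * (k - 1) / 2 : ℕ) + k := tri_succ k
          rw [ht]
          push_cast
          ring
  rw [h2, W_sum hq]
  ring
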